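/- Let 𝔤 be a compact Lie algebra with bi-invariant inner product ⟨·,·⟩ (i.e. ⟨[X,Y],Z⟩ = −⟨Y,[X,Z]⟩), 𝔥 a subalgebra, 𝔪 its orthogonal complement, and A : 𝔪 → 𝔪 the metric endomorphism of an ad(𝔥)-invariant inner product (·,·) = ⟨A·,·⟩ on 𝔪. Then for X ∈ 𝔪, V ∈ 𝔥, W ∈ 𝔪, the following are equivalent: (a) ([X+V+W, Y]_𝔪, X) = 0 for all Y ∈ 𝔪; (b) [A(X), X+V+W] ∈ 𝔥. -/

import Mathlib

/-- Proposition 2.5: 𝔤 compact Lie algebra with bi-invariant inner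
product ip, 𝔥 a subalgebra, 𝔪 its orthogonal complement, A the metric endomorphism
of an ad(𝔥)-invariant inner product (·,·) = ip (A ·) · on 𝔪. For X ∈ 𝔪, V ∈ 𝔥,
W ∈ 𝔪: ([X+V+W, Y]_𝔪, X) = 0 for all Y ∈ 𝔪 iff [A(X), X+V+W] ∈ 𝔥. -/
theorem stmt6 {g : Type*} [LieRing g] [LieAlgebra ℝ g] [FiniteDimensional ℝ g]
    -- ip : a bi-invariant inner product on 𝔤 :
    (ip : LinearMap.BilinForm ℝ g)
    (hsymm : ∀ X Y, ip X Y = ip Y X)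
    (hpos : ∀ X, X ≠ 0 → 0 < ip X X)
    (hbiinv : ∀ X Y Z : g, ip ⁅X, Y⁆ Z = - ip Y ⁅X, Z⁆)
    (h : LieSubalgebra ℝ g)
    -- 𝔪 : the ip-orthogonal complement of 𝔥 :
    (m : Submodule ℝ g)
    (hm : ∀ x, x ∈ m ↔ ∀ z ∈ h, ip x z = 0)
    -- pm : the orthogonal projection onto 𝔪 (so [·,·]_𝔪 = pm ⁅·,·⁆) :
    (pm : g →ₗ[ℝ] g) (hpm_ran : ∀ x, pm x ∈ m) (hpm_h : ∀ x, x - pm x ∈ h)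
    -- A : the metric endomorphism, symmetric, positive, 𝔪-preserving, ad(𝔥)-equivariant :
    (A : g →ₗ[ℝ] g)
    (hAsymm : ∀ X Y, ip (A X) Y = ip X (A Y))
    (hApos : ∀ X ∈ m, X ≠ 0 → 0 < ip (A X) X)
    (hAm : ∀ X ∈ m, A X ∈ m)
    (hAequiv : ∀ Z ∈ h, ∀ X ∈ m, A ⁅Z, X⁆ = ⁅Z, A X⁆)
    (X : g) (hX : X ∈ m) (V : g) (hV : V ∈ h) (W : g) (hW : W ∈ m) :
    (∀ Y ∈ m, ip (A (pm ⁅X + V + W, Y⁆)) X = 0) ↔ ⁅A X, X + V + W⁆ ∈ h := by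
  set Z := X + V + W with hZ
  have hAX : A X ∈ m := hAm X hX
  -- rewrite each term
  have key : ∀ Y : g, ip (A (pm ⁅Z, Y⁆)) X = - ip Y ⁅Z, A X⁆ := by
    intro Y
    have h1 : ip (A (pm ⁅Z, Y⁆)) X = ip (pm ⁅Z, Y⁆) (A X) := hAsymm _ _
    have h2 : ip (⁅Z, Y⁆ - pm ⁅Z, Y⁆) (A X) = 0 := by
      rw [hsymm]
      exact (hm (A X)).1 hAX _ (hpm_h _)
    have h3 : ip (pm ⁅Z, Y⁆) (A X) = ip ⁅Z, Y⁆ (A X) := by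
      have := h2
      rw [map_sub] at this
      simp only [LinearMap.sub_apply] at this
      linarith
    rw [h1, h3, hbiinv]
  constructor
  · intro hcond
    -- show ⁅A X, Z⁆ ∈ h; note ⁅A X, Z⁆ = -⁅Z, A X⁆
    have hu : ∀ Y ∈ m, ip Y ⁅Z, A X⁆ = 0 := by
      intro Y hY
      have := hcond Y hY
      rw [key Y] at this
      linarith
    set u := ⁅Z, A X⁆ with hu'
    have hpmu : pm u = 0 := by
      by_contra hne
      have hp := hpos (pm u) hne
      have e1 : ip (pm u) u = 0 := hu (pm u) (hpm_ran u)
      have e2 : ip (pm u) (u - pm u) = 0 := (hm (pm u)).1 (hpm_ran u) _ (hpm_h u)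
      rw [map_sub] at e2
      linarith
    have huh : u ∈ h := by
      have := hpm_h u
      rwa [hpmu, sub_zero] at this
    have : ⁅A X, Z⁆ = -u := by rw [hu', lie_skew]
    rw [this]
    exact neg_mem huh
  · intro hcond Y hY
    rw [key Y]
    have : ⁅Z, A X⁆ = -⁅A X, Z⁆ := (lie_skew _ _).symm
    rw [this]
    have := (hm Y).1 hY _ hcond
    simp only [map_neg] at this ⊢
    linarith [(hm Y).1 hY _ hcond]
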